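/- (Gentle measurement lemma.) Let ρ be a density operator on a finite-dimensional complex Hilbert space H, and let X be a positive semidefinite operator on H with X ≤ 1 (identity) and 1 − Tr(ρX) ≤ ε < 1. Then ‖ρ − √X ρ √X‖₁ ≤ √(8ε), where √X is the positive semidefinite square root of X. -/

import Mathlib

open scoped ComplexOrder
noncomputable section

/-- The positive semidefinite square root of a positive semidefinite matrix
(the definition removed from Mathlib, restored verbatim). -/
def Matrix.PosSemidef.sqrt {n : Type*} {𝕜 : Type*} [Fintype n] [RCLike 𝕜] [DecidableEq n]
    {A : Matrix n n 𝕜} (hA : A.PosSemidef) : Matrix n n 𝕜 :=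
  hA.1.eigenvectorUnitary.1 * Matrix.diagonal ((↑) ∘ (√·) ∘ hA.1.eigenvalues) *
  (star hA.1.eigenvectorUnitary : Matrix n n 𝕜)

lemma Matrix.PosSemidef.sqrt_eq_cfc {n : Type*} [Fintype n] [DecidableEq n]
    {A : Matrix n n ℂ} (hA : A.PosSemidef) : hA.sqrt = cfc Real.sqrt A := by
  rw [hA.1.cfc_eq]; rfl

lemma Matrix.PosSemidef.posSemidef_sqrt {n : Type*} [Fintype n] [DecidableEq n]
    {A : Matrix n n ℂ} (hA : A.PosSemidef) : hA.sqrt.PosSemidef := by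
  unfold Matrix.PosSemidef.sqrt
  rw [Matrix.star_eq_conjTranspose]
  refine Matrix.PosSemidef.mul_mul_conjTranspose_same ?_ _
  refine Matrix.posSemidef_diagonal_iff.mpr fun i => ?_
  exact RCLike.ofReal_nonneg.mpr (Real.sqrt_nonneg _)

lemma Matrix.PosSemidef.spec_nonneg {n : Type*} [Fintype n] [DecidableEq n]
    {A : Matrix n n ℂ} (hA : A.PosSemidef) : ∀ x ∈ spectrum ℝ A, 0 ≤ x := by
  intro x hx
  obtain ⟨i, rfl⟩ := hA.1.spectrum_real_eq_range_eigenvalues ▸ hx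
  exact hA.eigenvalues_nonneg i

lemma Matrix.PosSemidef.sqrt_mul_self {n : Type*} [Fintype n] [DecidableEq n]
    {A : Matrix n n ℂ} (hA : A.PosSemidef) : hA.sqrt * hA.sqrt = A := by
  have hsa : IsSelfAdjoint A := hA.1.isSelfAdjoint
  rw [hA.sqrt_eq_cfc, ← cfc_mul Real.sqrt Real.sqrt A]
  conv_rhs => rw [← cfc_id ℝ A hsa]
  refine cfc_congr fun x hx => ?_
  exact Real.mul_self_sqrt (hA.spec_nonneg x hx)

lemma Matrix.PosSemidef.eq_sqrt_of_sq_eq {n : Type*} [Fintype n] [DecidableEq n]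
    {A : Matrix n n ℂ} (hA : A.PosSemidef) {B : Matrix n n ℂ} (hB : B.PosSemidef)
    (hAB : A ^ 2 = B) : A = hB.sqrt := by
  have hsa : IsSelfAdjoint A := hA.1.isSelfAdjoint
  subst hAB
  rw [hB.sqrt_eq_cfc, ← cfc_pow_id (R := ℝ) A 2 hsa,
    ← cfc_comp Real.sqrt (fun x : ℝ => x ^ 2) A hsa]
  conv_lhs => rw [← cfc_id ℝ A hsa]
  refine cfc_congr fun x hx => ?_
  exact (Real.sqrt_sq (hA.spec_nonneg x hx)).symm

def traceNorm {n : Type*} [Fintype n] [DecidableEq n] (A : Matrix n n ℂ) : ℝ :=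
  ((Matrix.posSemidef_conjTranspose_mul_self A).sqrt).trace.re

def IsDensity {n : Type*} [Fintype n] (ρ : Matrix n n ℂ) : Prop :=
  ρ.PosSemidef ∧ ρ.trace = 1

namespace GentleAux

open Matrix

variable {n : Type*} [Fintype n] [DecidableEq n]

omit [DecidableEq n] in
lemma diag_re_nonneg {A : Matrix n n ℂ} (hA : A.PosSemidef) (i : n) : 0 ≤ (A i i).re := by
  classical
  have h := hA.re_dotProduct_nonneg (Pi.single i 1)
  simpa [dotProduct, Matrix.mulVec, Pi.single_apply, Finset.sum_ite_eq,
    Finset.sum_ite_eq'] using h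

omit [DecidableEq n] in
lemma trace_re_nonneg {A : Matrix n n ℂ} (hA : A.PosSemidef) : 0 ≤ A.trace.re := by
  rw [Matrix.trace, Complex.re_sum]
  exact Finset.sum_nonneg fun i _ => diag_re_nonneg hA i

lemma trace_mul_re_nonneg {A B : Matrix n n ℂ} (hA : A.PosSemidef) (hB : B.PosSemidef) :
    0 ≤ ((A * B).trace).re := by
  have hC : hB.sqrt.IsHermitian := hB.posSemidef_sqrt.1
  have h1 : (A * B).trace = (hB.sqrtᴴ * A * hB.sqrt).trace := by
    conv_lhs => rw [← hB.sqrt_mul_self, ← Matrix.mul_assoc]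
    rw [Matrix.trace_mul_cycle]
    exact congrArg (fun M => (M * A * hB.sqrt).trace) hC.eq.symm
  rw [h1]
  exact trace_re_nonneg (hA.conjTranspose_mul_mul_same _)

omit [DecidableEq n] in
lemma trace_self_re (A : Matrix n n ℂ) :
    ((Aᴴ * A).trace).re = ∑ p : n × n, ‖A p.2 p.1‖ ^ 2 := by
  rw [Matrix.trace, Complex.re_sum, Fintype.sum_prod_type]
  refine Finset.sum_congr rfl fun i _ => ?_
  rw [Matrix.diag_apply, Matrix.mul_apply, Complex.re_sum]
  refine Finset.sum_congr rfl fun j _ => ?_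
  rw [Matrix.conjTranspose_apply]
  rw [Complex.sq_norm]
  rw [show (star (A j i) * A j i) = ((Complex.normSq (A j i) : ℂ)) from by
    rw [Complex.star_def, Complex.normSq_eq_conj_mul_self]]
  simp

omit [DecidableEq n] in
lemma trace_cs (A B : Matrix n n ℂ) :
    ((Aᴴ * B).trace).re ≤
      Real.sqrt (((Aᴴ * A).trace).re) * Real.sqrt (((Bᴴ * B).trace).re) := by
  rw [trace_self_re A, trace_self_re B]
  have h1 : ((Aᴴ * B).trace).re = ∑ p : n × n, (star (A p.2 p.1) * B p.2 p.1).re := by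
    rw [Matrix.trace, Complex.re_sum, Fintype.sum_prod_type]
    refine Finset.sum_congr rfl fun i _ => ?_
    rw [Matrix.diag_apply, Matrix.mul_apply, Complex.re_sum]
    refine Finset.sum_congr rfl fun j _ => ?_
    rw [Matrix.conjTranspose_apply]
  rw [h1]
  calc ∑ p : n × n, (star (A p.2 p.1) * B p.2 p.1).re
      ≤ ∑ p : n × n, ‖A p.2 p.1‖ * ‖B p.2 p.1‖ := by
        refine Finset.sum_le_sum fun p _ => ?_
        refine (Complex.re_le_norm _).trans (le_of_eq ?_)
        rw [norm_mul, Complex.star_def, Complex.norm_conj]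
    _ ≤ _ := Real.sum_mul_le_sqrt_mul_sqrt _ _ _

/-- Conjugation of a real diagonal matrix by `U`. -/
def conjD (U : Matrix n n ℂ) (f : n → ℝ) : Matrix n n ℂ :=
  U * Matrix.diagonal (RCLike.ofReal ∘ f) * Uᴴ

lemma conjD_def (U : Matrix n n ℂ) (f : n → ℝ) :
    conjD U f = U * Matrix.diagonal (RCLike.ofReal ∘ f) * (star U) := by
  rw [Matrix.star_eq_conjTranspose]; rfl

variable {U : Matrix n n ℂ} (f g : n → ℝ)

omit [Fintype n] in
lemma ofReal_comp_sub : (RCLike.ofReal ∘ (f - g) : n → ℂ) =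
    fun i => RCLike.ofReal (f i) - RCLike.ofReal (g i) := by
  ext i; simp

lemma conjD_sub : conjD U f - conjD U g = conjD U (f - g) := by
  unfold conjD
  rw [← Matrix.sub_mul, ← Matrix.mul_sub, Matrix.diagonal_sub, ofReal_comp_sub f g]
  rfl

variable (hU : U ∈ Matrix.unitaryGroup n ℂ)
include hU

lemma conjD_mul : conjD U f * conjD U g = conjD U (f * g) := by
  have h : Uᴴ * U = 1 := by
    have := (Matrix.mem_unitaryGroup_iff').mp hU
    rwa [Matrix.star_eq_conjTranspose] at this
  have hmid : ∀ M : Matrix n n ℂ, Uᴴ * (U * M) = M := fun M => by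
    rw [← Matrix.mul_assoc, h, Matrix.one_mul]
  unfold conjD
  simp only [Matrix.mul_assoc, hmid]
  rw [← Matrix.mul_assoc (Matrix.diagonal _), Matrix.diagonal_mul_diagonal]
  have hd : (fun i => (RCLike.ofReal ∘ f : n → ℂ) i * (RCLike.ofReal ∘ g : n → ℂ) i)
      = (RCLike.ofReal ∘ (f * g) : n → ℂ) := by ext i; simp
  rw [hd]

lemma conjD_one : conjD U 1 = 1 := by
  have h : U * Uᴴ = 1 := by
    have := (Matrix.mem_unitaryGroup_iff).mp hU
    rwa [Matrix.star_eq_conjTranspose] at this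
  unfold conjD
  have hd : Matrix.diagonal (RCLike.ofReal ∘ (1 : n → ℝ) : n → ℂ) = 1 := by
    ext i j
    by_cases hij : i = j <;> simp [Matrix.diagonal_apply, Matrix.one_apply, hij]
  rw [hd, Matrix.mul_one, h]

lemma nonneg_of_conjD_posSemidef (hf : (conjD U f).PosSemidef) : ∀ i, 0 ≤ f i := by
  intro i
  have h : Uᴴ * U = 1 := by
    have := (Matrix.mem_unitaryGroup_iff').mp hU
    rwa [Matrix.star_eq_conjTranspose] at this
  have key : Uᴴ * conjD U f * U = Matrix.diagonal (RCLike.ofReal ∘ f) := by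
    unfold conjD
    simp only [Matrix.mul_assoc]
    rw [h, Matrix.mul_one, ← Matrix.mul_assoc, h, Matrix.one_mul]
  have hpsd := hf.conjTranspose_mul_mul_same U
  rw [key] at hpsd
  have := Matrix.posSemidef_diagonal_iff.mp hpsd i
  exact RCLike.ofReal_nonneg.mp this

omit hU

lemma conjD_posSemidef (hf : ∀ i, 0 ≤ f i) : (conjD U f).PosSemidef := by
  refine Matrix.PosSemidef.mul_mul_conjTranspose_same ?_ U
  refine Matrix.posSemidef_diagonal_iff.mpr fun i => ?_
  exact RCLike.ofReal_nonneg.mpr (hf i)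

lemma conjD_isHermitian : (conjD U f).IsHermitian := by
  refine Matrix.isHermitian_mul_mul_conjTranspose U ?_
  refine Matrix.isHermitian_diagonal_iff.mpr fun i => ?_
  exact RCLike.conj_ofReal _

end GentleAux

open GentleAux Matrix in
set_option maxHeartbeats 1000000 in
theorem gentle_measurement {d : ℕ} (ρ X : Matrix (Fin d) (Fin d) ℂ)
    (hρ : IsDensity ρ) (hX : X.PosSemidef) (hX1 : (1 - X).PosSemidef)
    (ε : ℝ) (hε : ε < 1) (h : 1 - ((ρ * X).trace).re ≤ ε) :
    traceNorm (ρ - hX.sqrt * ρ * hX.sqrt) ≤ Real.sqrt (8 * ε) := by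
  obtain ⟨hρp, hρtr⟩ := hρ
  set Y : Matrix (Fin d) (Fin d) ℂ := hX.sqrt with hYdef
  have hYp : Y.PosSemidef := hX.posSemidef_sqrt
  have hYY : Y * Y = X := hX.sqrt_mul_self
  -- eigen-decomposition of X
  set U : Matrix (Fin d) (Fin d) ℂ := (hX.1.eigenvectorUnitary : Matrix (Fin d) (Fin d) ℂ)
    with hUdef
  have hUmem : U ∈ Matrix.unitaryGroup (Fin d) ℂ := hX.1.eigenvectorUnitary.2
  set l : Fin d → ℝ := hX.1.eigenvalues with hldef
  have hXeq : X = conjD U l := by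
    rw [conjD_def]; exact hX.1.spectral_theorem
  set fS : Fin d → ℝ := fun i => Real.sqrt (l i) with hfSdef
  have hYeq : Y = conjD U fS := by
    rw [hYdef, conjD_def]; rfl
  have hl0 : ∀ i, 0 ≤ l i := hX.eigenvalues_nonneg
  have hl1 : ∀ i, l i ≤ 1 := by
    intro i
    have h1X : (1 : Matrix (Fin d) (Fin d) ℂ) - X = conjD U (1 - l) := by
      rw [hXeq, ← conjD_sub, conjD_one hUmem]
    have h2 := nonneg_of_conjD_posSemidef (1 - l) hUmem (h1X ▸ hX1) i
    simp only [Pi.sub_apply, Pi.one_apply] at h2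
    linarith
  have hfS1 : ∀ i, fS i ≤ 1 := fun i => Real.sqrt_le_one.mpr (hl1 i)
  have hfS0 : ∀ i, 0 ≤ fS i := fun i => Real.sqrt_nonneg _
  -- R := 1 - sqrt X
  set R : Matrix (Fin d) (Fin d) ℂ := 1 - Y with hRdef
  have hReq : R = conjD U (1 - fS) := by
    rw [hRdef, hYeq, ← conjD_one hUmem, conjD_sub]
  have hRherm : R.IsHermitian := hReq ▸ conjD_isHermitian (1 - fS)
  have hRRpsd : (R * R).PosSemidef := by
    rw [hReq, conjD_mul _ _ hUmem]
    exact conjD_posSemidef _ fun i => mul_nonneg (by simp [sub_nonneg, hfS1 i])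
      (by simp [sub_nonneg, hfS1 i])
  have hKey : ((1 - X) - R * R).PosSemidef := by
    have h1X : (1 : Matrix (Fin d) (Fin d) ℂ) - X = conjD U (1 - l) := by
      rw [hXeq, ← conjD_sub, conjD_one hUmem]
    rw [h1X, hReq, conjD_mul _ _ hUmem, conjD_sub]
    refine conjD_posSemidef _ fun i => ?_
    have hsq : fS i * fS i = l i := Real.mul_self_sqrt (hl0 i)
    have : l i ≤ fS i := by
      calc l i = fS i * fS i := hsq.symm
        _ ≤ fS i * 1 := mul_le_mul_of_nonneg_left (hfS1 i) (hfS0 i)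
        _ = fS i := mul_one _
    simp only [Pi.sub_apply, Pi.mul_apply, Pi.one_apply]
    nlinarith [hsq]
  -- Δ and its decomposition
  set Δ : Matrix (Fin d) (Fin d) ℂ := ρ - Y * ρ * Y with hΔdef
  have hΔdec : Δ = R * ρ + Y * (ρ * R) := by
    rw [hΔdef, hRdef]; noncomm_ring
  have hΔherm : Δ.IsHermitian := by
    have : Δᴴ = Δ := by
      rw [hΔdef]
      simp only [Matrix.conjTranspose_sub, Matrix.conjTranspose_mul, hρp.1.eq, hYp.1.eq]
      rw [Matrix.mul_assoc]
    exact this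
  -- eigen-decomposition of Δ
  set W : Matrix (Fin d) (Fin d) ℂ := (hΔherm.eigenvectorUnitary : Matrix (Fin d) (Fin d) ℂ)
    with hWdef
  have hWmem : W ∈ Matrix.unitaryGroup (Fin d) ℂ := hΔherm.eigenvectorUnitary.2
  set μ : Fin d → ℝ := hΔherm.eigenvalues with hμdef
  have hΔeq : Δ = conjD W μ := by
    rw [conjD_def]; exact hΔherm.spectral_theorem
  set s : Fin d → ℝ := fun i => if 0 ≤ μ i then 1 else -1 with hsdef
  set S : Matrix (Fin d) (Fin d) ℂ := conjD W s with hSdef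
  have hsμ : s * μ = fun i => |μ i| := by
    ext i
    by_cases hi : 0 ≤ μ i
    · simp [hsdef, hi, abs_of_nonneg hi]
    · simp [hsdef, hi, abs_of_neg (lt_of_not_ge hi)]
  have hss : s * s = 1 := by
    ext i
    by_cases hi : 0 ≤ μ i <;> simp [hsdef, hi]
  set P : Matrix (Fin d) (Fin d) ℂ := conjD W (fun i => |μ i|) with hPdef
  have hSΔ : S * Δ = P := by
    rw [hSdef, hΔeq, conjD_mul _ _ hWmem, hsμ]
  have hSS : S * S = 1 := by
    rw [hSdef, conjD_mul _ _ hWmem, hss, conjD_one hWmem]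
  have hSherm : S.IsHermitian := conjD_isHermitian s
  have hPpsd : P.PosSemidef := conjD_posSemidef _ fun i => abs_nonneg _
  have hPsq : P ^ 2 = Δᴴ * Δ := by
    rw [hΔherm.eq, pow_two, hPdef, conjD_mul _ _ hWmem, hΔeq, conjD_mul _ _ hWmem]
    have habs : ((fun i => |μ i|) * fun i => |μ i|) = μ * μ := by
      funext i
      exact abs_mul_abs_self _
    rw [habs]
  have hsqrtΔ : P = (Matrix.posSemidef_conjTranspose_mul_self Δ).sqrt :=
    hPpsd.eq_sqrt_of_sq_eq _ hPsq
  -- sqrt of ρ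
  set C : Matrix (Fin d) (Fin d) ℂ := hρp.sqrt with hCdef
  have hCC : C * C = ρ := hρp.sqrt_mul_self
  have hCherm : C.IsHermitian := hρp.posSemidef_sqrt.1
  -- numeric facts
  have hρre : ρ.trace.re = 1 := by rw [hρtr]; rfl
  have ha0 : 0 ≤ ((X * ρ).trace).re := trace_mul_re_nonneg hX hρp
  have haρX : (ρ * X).trace = (X * ρ).trace := Matrix.trace_mul_comm ρ X
  have ha1 : ((X * ρ).trace).re ≤ 1 := by
    have h0 := trace_mul_re_nonneg hX1 hρp
    have : (1 - X) * ρ = ρ - X * ρ := by rw [Matrix.sub_mul, Matrix.one_mul]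
    rw [this, Matrix.trace_sub, Complex.sub_re, hρre] at h0
    linarith
  have hε0 : 0 ≤ ε := by rw [haρX] at h; linarith
  set t : ℝ := ((R * R * ρ).trace).re with htdef
  have ht0 : 0 ≤ t := trace_mul_re_nonneg hRRpsd hρp
  have htε : t ≤ ε := by
    have h2 := trace_mul_re_nonneg hKey hρp
    have he : ((1 - X) - R * R) * ρ = ρ - X * ρ - R * R * ρ := by
      rw [Matrix.sub_mul, Matrix.sub_mul, Matrix.one_mul]
    rw [he, Matrix.trace_sub, Matrix.trace_sub, Complex.sub_re, Complex.sub_re, hρre] at h2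
    rw [haρX] at h
    linarith
  -- the three trace identities for term 1
  have tr1eq : ((C * R * S)ᴴ * C).trace = (S * (R * ρ)).trace := by
    have hAH : (C * R * S)ᴴ = S * (R * C) := by
      simp only [Matrix.conjTranspose_mul, hSherm.eq, hRherm.eq, hCherm.eq, Matrix.mul_assoc]
    rw [hAH]
    have e : S * (R * C) * C = S * (R * ρ) := by
      simp only [Matrix.mul_assoc]
      rw [hCC]
    rw [e]
  have tr1A : ((C * R * S)ᴴ * (C * R * S)).trace = (R * R * ρ).trace := by
    have hAH : (C * R * S)ᴴ = S * (R * C) := by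
      simp only [Matrix.conjTranspose_mul, hSherm.eq, hRherm.eq, hCherm.eq, Matrix.mul_assoc]
    rw [hAH]
    have e1 : S * (R * C) * (C * R * S) = S * (R * (C * (C * (R * S)))) := by
      simp only [Matrix.mul_assoc]
    rw [e1, Matrix.trace_mul_comm S (R * (C * (C * (R * S))))]
    have e2 : R * (C * (C * (R * S))) * S = R * (C * (C * (R * (S * S)))) := by
      simp only [Matrix.mul_assoc]
    rw [e2, hSS, Matrix.mul_one]
    rw [Matrix.trace_mul_comm R (C * (C * R))]
    have e4 : C * (C * R) * R = C * C * (R * R) := by simp only [Matrix.mul_assoc]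
    rw [e4, hCC, Matrix.trace_mul_comm ρ (R * R)]
  have tr1B : (Cᴴ * C).trace = ρ.trace := by rw [hCherm.eq, hCC]
  -- the three trace identities for term 2
  have tr2eq : ((R * C)ᴴ * (S * (Y * C))).trace = (S * (Y * (ρ * R))).trace := by
    have hAH : (R * C)ᴴ = C * R := by
      simp only [Matrix.conjTranspose_mul, hRherm.eq, hCherm.eq]
    rw [hAH, Matrix.trace_mul_comm (C * R) (S * (Y * C))]
    have e1 : S * (Y * C) * (C * R) = S * (Y * (ρ * R)) := by
      simp only [Matrix.mul_assoc]
      rw [← Matrix.mul_assoc C C R, hCC]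
    rw [e1]
  have tr2A : ((R * C)ᴴ * (R * C)).trace = (R * R * ρ).trace := by
    have hAH : (R * C)ᴴ = C * R := by
      simp only [Matrix.conjTranspose_mul, hRherm.eq, hCherm.eq]
    rw [hAH]
    have e1 : C * R * (R * C) = C * (R * (R * C)) := by simp only [Matrix.mul_assoc]
    rw [e1, Matrix.trace_mul_comm C (R * (R * C))]
    have e2 : R * (R * C) * C = R * R * (C * C) := by simp only [Matrix.mul_assoc]
    rw [e2, hCC]
  have tr2B : ((S * (Y * C))ᴴ * (S * (Y * C))).trace = (X * ρ).trace := by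
    have hAH : (S * (Y * C))ᴴ = C * Y * S := by
      simp only [Matrix.conjTranspose_mul, hSherm.eq, hYp.1.eq, hCherm.eq, Matrix.mul_assoc]
    rw [hAH]
    have e1 : C * Y * S * (S * (Y * C)) = C * (Y * ((S * S) * (Y * C))) := by
      simp only [Matrix.mul_assoc]
    rw [e1, hSS, Matrix.one_mul, Matrix.trace_mul_comm C (Y * (Y * C))]
    have e2 : Y * (Y * C) * C = Y * Y * (C * C) := by simp only [Matrix.mul_assoc]
    rw [e2, hYY, hCC]
  -- Cauchy-Schwarz bounds
  have hb1 : ((S * (R * ρ)).trace).re ≤ Real.sqrt t := by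
    have hcs := trace_cs (C * R * S) C
    rw [tr1eq, tr1A, tr1B] at hcs
    rw [hρre, Real.sqrt_one, mul_one] at hcs
    exact hcs
  have hb2 : ((S * (Y * (ρ * R))).trace).re ≤ Real.sqrt t := by
    have hcs := trace_cs (R * C) (S * (Y * C))
    rw [tr2eq, tr2A, tr2B] at hcs
    have hle : Real.sqrt (((X * ρ).trace).re) ≤ 1 :=
      (Real.sqrt_le_sqrt ha1).trans_eq Real.sqrt_one
    calc ((S * (Y * (ρ * R))).trace).re
        ≤ Real.sqrt t * Real.sqrt (((X * ρ).trace).re) := hcs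
      _ ≤ Real.sqrt t * 1 := mul_le_mul_of_nonneg_left hle (Real.sqrt_nonneg _)
      _ = Real.sqrt t := mul_one _
  -- assemble
  have hTN : traceNorm Δ = ((S * Δ).trace).re := by
    rw [traceNorm, ← hsqrtΔ, hSΔ]
  have hsplit : (S * Δ).trace = (S * (R * ρ)).trace + (S * (Y * (ρ * R))).trace := by
    rw [hΔdec, Matrix.mul_add, Matrix.trace_add]
  have hfinal : traceNorm Δ ≤ 2 * Real.sqrt t := by
    rw [hTN, hsplit, Complex.add_re]
    linarith
  have hst : Real.sqrt t ≤ Real.sqrt ε := Real.sqrt_le_sqrt htε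
  have h48 : 2 * Real.sqrt ε ≤ Real.sqrt (8 * ε) := by
    have h4 : (2 : ℝ) * Real.sqrt ε = Real.sqrt (4 * ε) := by
      rw [show (4 : ℝ) * ε = 2 ^ 2 * ε by ring, Real.sqrt_mul (by positivity) ε,
        Real.sqrt_sq (by norm_num : (0:ℝ) ≤ 2)]
    rw [h4]
    exact Real.sqrt_le_sqrt (by linarith)
  calc traceNorm Δ ≤ 2 * Real.sqrt t := hfinal
    _ ≤ 2 * Real.sqrt ε := by linarith
    _ ≤ Real.sqrt (8 * ε) := h48
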